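/- arXiv:1203.5955 — 2 statements merged into one kernel-verified Lean document; each statement's English description precedes it below -/
import Mathlib

section
/- Let w₁, …, w_n be real numbers not all zero with min_i w_i < 0 < max_i w_i. Then the function h(λ) = (1/n) Σ_{i=1}^n w_i/(1 + λ w_i), defined on the open interval (−1/max_i w_i, −1/min_i w_i), is strictly decreasing and has a unique zero λ* in that interval, and 1 + λ* w_i > 0 for all i. -/
open Finset

set_option maxHeartbeats 1600000 in
/-- Existence and uniqueness of the empirical likelihood Lagrange multiplier: if
`min_i w_i < 0 < max_i w_i`, then `h(λ) = (1/n) Σ w_i/(1 + λ w_i)` is strictly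
decreasing on `(−1/max_i w_i, −1/min_i w_i)` and has a unique zero `λ*` there,
with `1 + λ* w_i > 0` for all `i`. -/
theorem el_lagrange_multiplier {n : ℕ} (w : Fin n → ℝ)
    (hne : (Finset.univ : Finset (Fin n)).Nonempty)
    (hmin : Finset.univ.inf' hne w < 0) (hmax : 0 < Finset.univ.sup' hne w) :
    StrictAntiOn (fun l : ℝ => (1 / (n : ℝ)) * ∑ i, w i / (1 + l * w i))
        (Set.Ioo (-1 / Finset.univ.sup' hne w) (-1 / Finset.univ.inf' hne w)) ∧
    ∃! l : ℝ,
      l ∈ Set.Ioo (-1 / Finset.univ.sup' hne w) (-1 / Finset.univ.inf' hne w) ∧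
      (1 / (n : ℝ)) * ∑ i, w i / (1 + l * w i) = 0 ∧
      ∀ i, 0 < 1 + l * w i := by
  have hwleM : ∀ i, w i ≤ Finset.univ.sup' hne w :=
    fun i => Finset.le_sup' w (Finset.mem_univ i)
  have hmlew : ∀ i, Finset.univ.inf' hne w ≤ w i :=
    fun i => Finset.inf'_le w (Finset.mem_univ i)
  obtain ⟨i0, -, hi0⟩ := Finset.exists_mem_eq_sup' hne w
  obtain ⟨j0, -, hj0⟩ := Finset.exists_mem_eq_inf' hne w
  set M := Finset.univ.sup' hne w with hM
  set m := Finset.univ.inf' hne w with hm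
  clear_value M m
  have hwi0 : w i0 = M := hi0.symm
  have hwj0 : w j0 = m := hj0.symm
  have hm' : (0:ℝ) < -m := by linarith
  have hnpos : (0 : ℝ) < n := by
    obtain ⟨k, -⟩ := hne
    exact_mod_cast k.pos
  have hnn : 0 < n := Nat.cast_pos.mp hnpos
  have hn1 : (1 : ℝ) ≤ n := by exact_mod_cast hnn
  have hmIpos : (0:ℝ) < -1 / m := by
    rw [neg_div]
    have : 1/m < 0 := one_div_neg.mpr hmin
    linarith
  have hMIneg : -1 / M < 0 := by
    rw [neg_div]
    have : (0:ℝ) < 1/M := by positivity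
    linarith
  -- denominators positive on the interval
  have hpos : ∀ l ∈ Set.Ioo (-1 / M) (-1 / m), ∀ i, 0 < 1 + l * w i := by
    rintro l ⟨hl1, hl2⟩ i
    rcases le_or_gt l 0 with hl0 | hl0
    · have h1 : -1 < l * M := (div_lt_iff₀ hmax).mp hl1
      have h2 : l * M ≤ l * w i := mul_le_mul_of_nonpos_left (hwleM i) hl0
      linarith
    · have h1 : -1 < l * m := (lt_div_iff_of_neg hmin).mp hl2
      have h2 : l * m ≤ l * w i := mul_le_mul_of_nonneg_left (hmlew i) hl0.le
      linarith
  -- strict antitonicity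
  have hanti : StrictAntiOn (fun l : ℝ => (1 / (n : ℝ)) * ∑ i, w i / (1 + l * w i))
      (Set.Ioo (-1 / M) (-1 / m)) := by
    intro x hx y hy hxy
    have hsum : (∑ i, w i / (1 + y * w i)) < ∑ i, w i / (1 + x * w i) := by
      refine Finset.sum_lt_sum (fun i _ => ?_) ⟨i0, Finset.mem_univ i0, ?_⟩
      · have dx := hpos x hx i
        have dy := hpos y hy i
        rw [div_le_div_iff₀ dy dx]
        nlinarith [sq_nonneg (w i)]
      · have dx := hpos x hx i0
        have dy := hpos y hy i0
        have hwi0p : 0 < w i0 := by rw [hwi0]; exact hmax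
        rw [div_lt_div_iff₀ dy dx]
        nlinarith [mul_pos (mul_pos hwi0p hwi0p) (sub_pos.2 hxy)]
    exact mul_lt_mul_of_pos_left hsum (by positivity)
  refine ⟨hanti, ?_⟩
  -- point a near the left endpoint where the function is positive
  set ε : ℝ := min (1/(2*M)) (1/(2*n*(-m))) with hε
  have hεpos : 0 < ε := lt_min (by positivity) (by positivity)
  have hεle : ε ≤ 1/(2*M) := min_le_left _ _
  have hεle2 : ε ≤ 1/(2*n*(-m)) := min_le_right _ _
  clear_value ε
  set a : ℝ := -1/M + ε with ha
  clear_value a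
  have ha0 : a < 0 := by
    have h1 : (1:ℝ)/(2*M) < 1/M := one_div_lt_one_div_of_lt hmax (by linarith)
    rw [ha, neg_div]
    linarith
  have haI : a ∈ Set.Ioo (-1/M) (-1/m) := by
    constructor
    · rw [ha]; linarith
    · linarith
  have habound : ∀ i, m ≤ w i / (1 + a * w i) := by
    intro i
    have da := hpos a haI i
    rcases le_or_gt (w i) 0 with hwi | hwi
    · have hd1 : 1 ≤ 1 + a * w i := by nlinarith [mul_nonneg (neg_nonneg.2 ha0.le) (neg_nonneg.2 hwi)]
      have h2 : w i ≤ w i / (1 + a * w i) := by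
        rw [le_div_iff₀ da]
        nlinarith [mul_nonneg (neg_nonneg.2 hwi) (sub_nonneg.2 hd1)]
      linarith [hmlew i]
    · have : 0 < w i / (1 + a * w i) := div_pos hwi da
      linarith
  have hfa : 0 < (1 / (n : ℝ)) * ∑ i, w i / (1 + a * w i) := by
    have hden : 1 + a * M = ε * M := by
      rw [ha]
      field_simp
      ring
    have hterm : w i0 / (1 + a * w i0) = 1/ε := by
      rw [hwi0, hden, div_eq_div_iff (by positivity) hεpos.ne']
      ring
    have hrest : ((Finset.univ.erase i0).card : ℝ) * m ≤ ∑ i ∈ Finset.univ.erase i0, w i / (1 + a * w i) := by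
      calc ((Finset.univ.erase i0).card : ℝ) * m = ∑ _i ∈ Finset.univ.erase i0, m := by
            rw [Finset.sum_const, nsmul_eq_mul]
        _ ≤ _ := Finset.sum_le_sum (fun i _ => habound i)
    have hcardn : (Finset.univ.erase i0).card ≤ n := by
      simpa using Finset.card_erase_le (a := i0) (s := (Finset.univ : Finset (Fin n)))
    have hcard : ((Finset.univ.erase i0).card : ℝ) ≤ n := by exact_mod_cast hcardn
    have hcm : (n:ℝ) * m ≤ ((Finset.univ.erase i0).card : ℝ) * m := by nlinarith
    have hinv : 2*(n:ℝ)*(-m) ≤ 1/ε := by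
      have := one_div_le_one_div_of_le hεpos hεle2
      rwa [one_div_one_div] at this
    have hS : 0 < ∑ i, w i / (1 + a * w i) := by
      rw [← Finset.add_sum_erase _ _ (Finset.mem_univ i0), hterm]
      nlinarith [mul_pos hnpos hm']
    exact mul_pos (by positivity) hS
  -- point b near the right endpoint where the function is negative
  set ε' : ℝ := min (1/(2*(-m))) (1/(2*n*M)) with hε'
  have hε'pos : 0 < ε' := lt_min (by positivity) (by positivity)
  have hε'le : ε' ≤ 1/(2*(-m)) := min_le_left _ _
  have hε'le2 : ε' ≤ 1/(2*n*M) := min_le_right _ _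
  clear_value ε'
  set b : ℝ := -1/m - ε' with hb
  clear_value b
  have hb0 : 0 < b := by
    have h1 : (1:ℝ)/(2*(-m)) < 1/(-m) := one_div_lt_one_div_of_lt hm' (by linarith)
    have he : (-1:ℝ)/m = 1/(-m) := by rw [neg_div, div_neg]
    rw [hb, he]
    linarith
  have hbI : b ∈ Set.Ioo (-1/M) (-1/m) := by
    constructor
    · linarith
    · rw [hb]; linarith
  have hbbound : ∀ i, w i / (1 + b * w i) ≤ M := by
    intro i
    have db := hpos b hbI i
    rcases le_or_gt (w i) 0 with hwi | hwi
    · have : w i / (1 + b * w i) ≤ 0 := div_nonpos_of_nonpos_of_nonneg hwi db.le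
      linarith
    · have hd1 : (1:ℝ) ≤ 1 + b * w i := by linarith [mul_pos hb0 hwi]
      have := div_le_self hwi.le hd1
      linarith [hwleM i]
  have hfb : (1 / (n : ℝ)) * ∑ i, w i / (1 + b * w i) < 0 := by
    have hden : 1 + b * m = ε' * (-m) := by
      rw [hb]
      field_simp [hmin.ne]
      ring
    have hterm : w j0 / (1 + b * w j0) = -(1/ε') := by
      rw [hwj0, hden, div_eq_iff (mul_pos hε'pos hm').ne']
      field_simp
    have hrest : ∑ i ∈ Finset.univ.erase j0, w i / (1 + b * w i) ≤ ((Finset.univ.erase j0).card : ℝ) * M := by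
      calc ∑ i ∈ Finset.univ.erase j0, w i / (1 + b * w i)
          ≤ ∑ _i ∈ Finset.univ.erase j0, M := Finset.sum_le_sum (fun i _ => hbbound i)
        _ = _ := by rw [Finset.sum_const, nsmul_eq_mul]
    have hcardn : (Finset.univ.erase j0).card ≤ n := by
      simpa using Finset.card_erase_le (a := j0) (s := (Finset.univ : Finset (Fin n)))
    have hcard : ((Finset.univ.erase j0).card : ℝ) ≤ n := by exact_mod_cast hcardn
    have hcM : ((Finset.univ.erase j0).card : ℝ) * M ≤ (n:ℝ) * M := by nlinarith
    have hinv : 2*(n:ℝ)*M ≤ 1/ε' := by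
      have := one_div_le_one_div_of_le hε'pos hε'le2
      rwa [one_div_one_div] at this
    have hS : ∑ i, w i / (1 + b * w i) < 0 := by
      rw [← Finset.add_sum_erase _ _ (Finset.mem_univ j0), hterm]
      nlinarith [mul_pos hnpos hmax]
    exact mul_neg_of_pos_of_neg (by positivity) hS
  -- IVT
  have hab : a ≤ b := le_of_lt (lt_trans ha0 hb0)
  have hIcc : Set.Icc a b ⊆ Set.Ioo (-1/M) (-1/m) := fun x hx =>
    ⟨lt_of_lt_of_le haI.1 hx.1, lt_of_le_of_lt hx.2 hbI.2⟩
  have hcont : ContinuousOn (fun l : ℝ => (1 / (n : ℝ)) * ∑ i, w i / (1 + l * w i))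
      (Set.Icc a b) := by
    apply ContinuousOn.mul continuousOn_const
    apply continuousOn_finset_sum
    intro i _
    exact ContinuousOn.div continuousOn_const
      ((continuous_const.add (continuous_id.mul continuous_const)).continuousOn)
      (fun x hx => (hpos x (hIcc hx) i).ne')
  obtain ⟨l, hlmem, hl0⟩ := intermediate_value_Icc' hab hcont ⟨hfb.le, hfa.le⟩
  have hl0' : (1 / (n : ℝ)) * ∑ i, w i / (1 + l * w i) = 0 := hl0
  have hlI : l ∈ Set.Ioo (-1/M) (-1/m) := hIcc hlmem
  refine ⟨l, ⟨hlI, hl0, hpos l hlI⟩, ?_⟩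
  rintro l' ⟨hl'I, hl'0, -⟩
  rcases lt_trichotomy l' l with h | h | h
  · have h2 := hanti hl'I hlI h
    simp only at h2
    rw [hl0', hl'0] at h2
    exact absurd h2 (lt_irrefl 0)
  · exact h
  · have h2 := hanti hlI hl'I h
    simp only at h2
    rw [hl0', hl'0] at h2
    exact absurd h2 (lt_irrefl 0)
end

section
/- Let w₁, …, w_n be reals with min_i w_i < 0 < max_i w_i, and let λ be the unique solution of Σ_{i=1}^n w_i/(1 + λ w_i) = 0 with 1 + λ w_i > 0 for all i. Set X_i = λ w_i, W̄ = (1/n)Σ w_i, S² = (1/n)Σ w_i². Then (1/n) Σ_{i=1}^n X_i²/(1 + X_i) = λ W̄, and consequently λ² S² ≤ λ W̄ · (1 + max_{1≤j≤n} |X_j|). -/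
open Finset

/-- Deterministic identities for the empirical likelihood expansion: if `λ` solves
`Σ w_i/(1 + λ w_i) = 0` with `1 + λ w_i > 0` for all `i`, and `X_i = λ w_i`,
`W̄ = (1/n)Σ w_i`, `S² = (1/n)Σ w_i²`, then
`(1/n) Σ X_i²/(1 + X_i) = λ W̄` and `λ² S² ≤ λ W̄ (1 + max_j |X_j|)`. -/
theorem el_lambda_identities {n : ℕ} (w : Fin n → ℝ)
    (hne : (Finset.univ : Finset (Fin n)).Nonempty)
    (hmin : Finset.univ.inf' hne w < 0) (hmax : 0 < Finset.univ.sup' hne w)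
    (lam : ℝ) (hpos : ∀ i, 0 < 1 + lam * w i)
    (hsol : ∑ i, w i / (1 + lam * w i) = 0) :
    (1 / (n : ℝ)) * ∑ i, (lam * w i) ^ 2 / (1 + lam * w i)
        = lam * ((1 / (n : ℝ)) * ∑ i, w i) ∧
    lam ^ 2 * ((1 / (n : ℝ)) * ∑ i, w i ^ 2)
        ≤ lam * ((1 / (n : ℝ)) * ∑ i, w i)
          * (1 + Finset.univ.sup' hne fun j => |lam * w j|) := by
  have key : ∀ i, (lam * w i) ^ 2 / (1 + lam * w i)
      = lam * w i - lam * (w i / (1 + lam * w i)) := by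
    intro i
    have h := (hpos i).ne'
    field_simp
    ring
  have hsum : ∑ i, (lam * w i) ^ 2 / (1 + lam * w i) = lam * ∑ i, w i := by
    rw [Finset.sum_congr rfl fun i _ => key i, Finset.sum_sub_distrib,
      ← Finset.mul_sum, ← Finset.mul_sum, hsol, mul_zero, sub_zero]
  have h1 : (1 / (n : ℝ)) * ∑ i, (lam * w i) ^ 2 / (1 + lam * w i)
      = lam * ((1 / (n : ℝ)) * ∑ i, w i) := by rw [hsum]; ring
  refine ⟨h1, ?_⟩
  set M := Finset.univ.sup' hne fun j => |lam * w j| with hM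
  have hMle : ∀ i, 1 + lam * w i ≤ 1 + M := by
    intro i
    have : |lam * w i| ≤ M := Finset.le_sup' (fun j => |lam * w j|) (Finset.mem_univ i)
    linarith [le_abs_self (lam * w i)]
  have hterm : ∀ i, (lam * w i) ^ 2
      ≤ ((lam * w i) ^ 2 / (1 + lam * w i)) * (1 + M) := by
    intro i
    have hp := hpos i
    have hnn : 0 ≤ (lam * w i) ^ 2 / (1 + lam * w i) :=
      div_nonneg (sq_nonneg _) hp.le
    calc (lam * w i) ^ 2 = ((lam * w i) ^ 2 / (1 + lam * w i)) * (1 + lam * w i) := by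
          field_simp
      _ ≤ ((lam * w i) ^ 2 / (1 + lam * w i)) * (1 + M) :=
          mul_le_mul_of_nonneg_left (hMle i) hnn
  have hsum2 : ∑ i, (lam * w i) ^ 2
      ≤ (∑ i, (lam * w i) ^ 2 / (1 + lam * w i)) * (1 + M) := by
    rw [Finset.sum_mul]
    exact Finset.sum_le_sum fun i _ => hterm i
  have hn : (0 : ℝ) ≤ 1 / (n : ℝ) := by positivity
  have := mul_le_mul_of_nonneg_left hsum2 hn
  calc lam ^ 2 * ((1 / (n : ℝ)) * ∑ i, w i ^ 2)
      = (1 / (n : ℝ)) * ∑ i, (lam * w i) ^ 2 := by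
        simp only [mul_pow, ← Finset.mul_sum]; ring
    _ ≤ (1 / (n : ℝ)) * ((∑ i, (lam * w i) ^ 2 / (1 + lam * w i)) * (1 + M)) := this
    _ = ((1 / (n : ℝ)) * ∑ i, (lam * w i) ^ 2 / (1 + lam * w i)) * (1 + M) := by ring
    _ = lam * ((1 / (n : ℝ)) * ∑ i, w i) * (1 + M) := by rw [h1]
end
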